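/- Let L > 0 be sufficiently large, (g_j)_{j ∈ ℤ²} a bounded family of reals, and suppose f : ℝ² → ℝ satisfies |f(y)| ≤ C·∑_{j ∈ ℤ²} |g_j|·θ(y − Lj) for all y, where θ(z) = (1+|z|)^{-3}. Then for any x₀ ∈ ℝ², sup_{x ∈ ℝ²} |f(x)|·θ(x−x₀)^{-1} ≤ C'·sup_{j ∈ ℤ²} |g_j|·θ(x₀ − Lj)^{-1}, with C' independent of L and x₀. -/

import Mathlib

open MeasureTheory

noncomputable def theta (z : EuclideanSpace ℝ (Fin 2)) : ℝ := ((1 + ‖z‖) ^ 3)⁻¹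

noncomputable def latt (n : ℤ × ℤ) : EuclideanSpace ℝ (Fin 2) :=
  (WithLp.equiv 2 (Fin 2 → ℝ)).symm ![(n.1 : ℝ), (n.2 : ℝ)]

lemma theta_pos (z : EuclideanSpace ℝ (Fin 2)) : 0 < theta z := by
  have h : (0:ℝ) < 1 + ‖z‖ := by positivity
  exact inv_pos.mpr (by positivity)

lemma theta_anti {a b : EuclideanSpace ℝ (Fin 2)} (h : ‖a‖ ≤ ‖b‖) : theta b ≤ theta a := by
  unfold theta
  have h0 : (0:ℝ) < 1 + ‖a‖ := by positivity
  gcongr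

lemma latt_apply0 (n : ℤ × ℤ) : latt n 0 = (n.1 : ℝ) := rfl
lemma latt_apply1 (n : ℤ × ℤ) : latt n 1 = (n.2 : ℝ) := rfl

lemma latt_sub (m j : ℤ × ℤ) : latt (m - j) = latt m - latt j := by
  ext i
  fin_cases i <;>
    simp [latt, WithLp.equiv_symm_apply, PiLp.toLp_apply, Matrix.cons_val_zero, Matrix.cons_val_one]

lemma coord_le_norm (x : EuclideanSpace ℝ (Fin 2)) (i : Fin 2) : |x i| ≤ ‖x‖ := by
  have := EuclideanSpace.norm_eq x
  rw [this]
  rw [show |x i| = Real.sqrt ((x i)^2) by rw [Real.sqrt_sq_eq_abs]]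
  apply Real.sqrt_le_sqrt
  fin_cases i <;> simp [Fin.sum_univ_two, Real.norm_eq_abs, sq_abs] <;> positivity

lemma norm_le_of_coords (x : EuclideanSpace ℝ (Fin 2)) (c : ℝ) (hc : 0 ≤ c)
    (h0 : |x 0| ≤ c) (h1 : |x 1| ≤ c) : ‖x‖ ≤ Real.sqrt 2 * c := by
  rw [EuclideanSpace.norm_eq, Fin.sum_univ_two]
  rw [show Real.sqrt 2 * c = Real.sqrt (2 * c^2) by
    rw [Real.sqrt_mul (by norm_num), Real.sqrt_sq hc]]
  apply Real.sqrt_le_sqrt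
  have h0' : ‖x 0‖^2 ≤ c^2 := by rw [Real.norm_eq_abs]; nlinarith [abs_nonneg (x 0), neg_abs_le (x 0), le_abs_self (x 0), sq_abs (x 0), sq_nonneg (|x 0| - c), sq_nonneg (|x 0| + c)]
  have h1' : ‖x 1‖^2 ≤ c^2 := by rw [Real.norm_eq_abs]; nlinarith [abs_nonneg (x 1), neg_abs_le (x 1), le_abs_self (x 1), sq_abs (x 1), sq_nonneg (|x 1| - c), sq_nonneg (|x 1| + c)]
  linarith

noncomputable def H (n : ℤ) : ℝ := (max 1 |(n : ℝ)|) ^ (-(3/2) : ℝ)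

lemma H_nonneg (n : ℤ) : 0 ≤ H n := Real.rpow_nonneg (le_trans zero_le_one (le_max_left _ _)) _

lemma summable_H : Summable H := by
  have h1 : Summable fun n : ℤ => |(n : ℝ)| ^ (-(3/2) : ℝ) :=
    Real.summable_abs_int_rpow (by norm_num)
  have h2 : Summable fun n : ℤ => if n = 0 then (1:ℝ) else 0 :=
    summable_of_ne_finset_zero (s := {0}) (by intro n hn; simp at hn ⊢; exact fun h => absurd h hn)
  apply (h1.add h2).congr
  intro n
  by_cases h : n = 0
  · subst h
    simp only [H, Int.cast_zero, abs_zero]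
    rw [Real.zero_rpow (by norm_num), max_eq_left zero_le_one, Real.one_rpow]
    norm_num
  · have : (1:ℝ) ≤ |(n:ℝ)| := by
      rw [← Int.cast_abs]
      exact_mod_cast Int.one_le_abs (by exact_mod_cast h)
    simp [H, h, max_eq_right this]

noncomputable def G (k : ℤ × ℤ) : ℝ := ((max 1 ‖latt k‖) ^ 3)⁻¹

lemma G_nonneg (k : ℤ × ℤ) : 0 ≤ G k := by
  unfold G
  have : (0:ℝ) < max 1 ‖latt k‖ := lt_of_lt_of_le one_pos (le_max_left _ _)
  positivity

lemma summable_G : Summable G := by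
  have hHH : Summable (fun k : ℤ × ℤ => H k.1 * H k.2) :=
    summable_H.mul_of_nonneg summable_H H_nonneg H_nonneg
  apply Summable.of_nonneg_of_le G_nonneg _ hHH
  intro k
  set a : ℝ := max 1 |(k.1 : ℝ)| with ha
  set b : ℝ := max 1 |(k.2 : ℝ)| with hb
  set c : ℝ := max 1 ‖latt k‖ with hc
  have ha1 : (1:ℝ) ≤ a := le_max_left _ _
  have hb1 : (1:ℝ) ≤ b := le_max_left _ _
  have hc1 : (1:ℝ) ≤ c := le_max_left _ _
  have hac : a ≤ c := max_le_max le_rfl (by rw [← latt_apply0 k]; exact coord_le_norm _ 0)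
  have hbc : b ≤ c := max_le_max le_rfl (by rw [← latt_apply1 k]; exact coord_le_norm _ 1)
  have key : a ^ ((3:ℝ)/2) * b ^ ((3:ℝ)/2) ≤ c ^ 3 := by
    have h1 : a * b ≤ c ^ 2 := by nlinarith
    have h2 : (a * b) ^ ((3:ℝ)/2) ≤ (c ^ 2) ^ ((3:ℝ)/2) :=
      Real.rpow_le_rpow (by positivity) h1 (by norm_num)
    rw [Real.mul_rpow (by positivity) (by positivity)] at h2
    have h3 : ((c ^ 2 : ℝ)) ^ ((3:ℝ)/2) = c ^ (3 : ℕ) := by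
      rw [← Real.rpow_natCast c 2, ← Real.rpow_mul (by positivity),
        ← Real.rpow_natCast c 3]
      norm_num
    rw [h3] at h2
    exact h2
  have hG : G k ≤ (a ^ ((3:ℝ)/2) * b ^ ((3:ℝ)/2))⁻¹ := by
    unfold G
    rw [← hc]
    apply inv_anti₀ (by positivity) key
  refine hG.trans_eq ?_
  unfold H
  rw [Real.rpow_neg (by positivity), Real.rpow_neg (by positivity), mul_inv, ← ha, ← hb]

noncomputable def Kc : ℝ := ∑' k : ℤ × ℤ, G k

lemma theta_le_G (w : EuclideanSpace ℝ (Fin 2)) (j : ℤ × ℤ) :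
    theta (w - latt j) ≤ G ((round (w 0), round (w 1)) - j) := by
  set m : ℤ × ℤ := (round (w 0), round (w 1)) with hm
  have hwm : ‖w - latt m‖ ≤ 1 := by
    have h0 : |(w - latt m) 0| ≤ 1/2 := by
      have : (w - latt m) 0 = w 0 - (round (w 0) : ℝ) := rfl
      rw [this]; exact abs_sub_round (w 0)
    have h1 : |(w - latt m) 1| ≤ 1/2 := by
      have : (w - latt m) 1 = w 1 - (round (w 1) : ℝ) := rfl
      rw [this]; exact abs_sub_round (w 1)
    calc ‖w - latt m‖ ≤ Real.sqrt 2 * (1/2) := norm_le_of_coords _ _ (by norm_num) h0 h1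
      _ ≤ 2 * (1/2) := by
          gcongr
          nlinarith [Real.sq_sqrt (show (0:ℝ) ≤ 2 by norm_num), Real.sqrt_nonneg 2]
      _ = 1 := by norm_num
  have key : max 1 ‖latt (m - j)‖ ≤ 1 + ‖w - latt j‖ := by
    apply max_le
    · linarith [norm_nonneg (w - latt j)]
    · rw [latt_sub]
      have tri : ‖latt m - latt j‖ ≤ ‖latt m - w‖ + ‖w - latt j‖ :=
        norm_sub_le_norm_sub_add_norm_sub _ _ _
      have : ‖latt m - w‖ ≤ 1 := by rw [norm_sub_rev]; exact hwm
      linarith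
  unfold theta G
  apply inv_anti₀
  · have : (0:ℝ) < max 1 ‖latt (m - j)‖ := lt_of_lt_of_le one_pos (le_max_left _ _)
    positivity
  · exact pow_le_pow_left₀ (le_trans zero_le_one (le_max_left _ _)) key 3

lemma summable_theta (L : ℝ) (hL : 1 ≤ L) (z : EuclideanSpace ℝ (Fin 2)) :
    Summable (fun j : ℤ × ℤ => theta (z - L • latt j)) ∧
    (∑' j : ℤ × ℤ, theta (z - L • latt j)) ≤ Kc := by
  have hL0 : (0:ℝ) < L := lt_of_lt_of_le one_pos hL
  set w : EuclideanSpace ℝ (Fin 2) := L⁻¹ • z with hw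
  have hnorm : ∀ j : ℤ × ℤ, ‖w - latt j‖ ≤ ‖z - L • latt j‖ := by
    intro j
    have hz : z - L • latt j = L • (w - latt j) := by
      rw [hw, smul_sub, smul_smul, mul_inv_cancel₀ (ne_of_gt hL0), one_smul]
    rw [hz, norm_smul, Real.norm_eq_abs, abs_of_pos hL0]
    nlinarith [norm_nonneg (w - latt j)]
  set m : ℤ × ℤ := (round (w 0), round (w 1)) with hm
  have hle : ∀ j : ℤ × ℤ, theta (z - L • latt j) ≤ G (m - j) := fun j =>
    le_trans (theta_anti (hnorm j)) (theta_le_G w j)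
  have hsum : Summable (fun j : ℤ × ℤ => G (m - j)) := by
    have : (fun j : ℤ × ℤ => G (m - j)) = G ∘ (Equiv.subLeft m) := rfl
    rw [this, Equiv.summable_iff]
    exact summable_G
  have hS : Summable (fun j : ℤ × ℤ => theta (z - L • latt j)) :=
    Summable.of_nonneg_of_le (fun j => (theta_pos _).le) hle hsum
  refine ⟨hS, ?_⟩
  calc (∑' j : ℤ × ℤ, theta (z - L • latt j)) ≤ ∑' j : ℤ × ℤ, G (m - j) :=
        Summable.tsum_le_tsum hle hS hsum
    _ = Kc := (Equiv.subLeft m).tsum_eq G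

lemma theta_doubling {u v : EuclideanSpace ℝ (Fin 2)} (h : ‖u‖ ≤ 2 * ‖v‖ + 1) :
    theta v ≤ 8 * theta u := by
  have h3 : (1 + ‖u‖)^3 ≤ 8 * (1 + ‖v‖)^3 := by
    have h2 : 1 + ‖u‖ ≤ 2 * (1 + ‖v‖) := by linarith
    calc (1 + ‖u‖)^3 ≤ (2 * (1 + ‖v‖))^3 :=
          pow_le_pow_left₀ (by positivity) h2 3
      _ = 8 * (1 + ‖v‖)^3 := by ring
  unfold theta
  calc ((1 + ‖v‖)^3)⁻¹ ≤ ((1 + ‖u‖)^3 / 8)⁻¹ := by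
        apply inv_anti₀ (by positivity)
        linarith
    _ = 8 * ((1 + ‖u‖)^3)⁻¹ := by
        rw [inv_div]
        ring

lemma theta_mul (x y p : EuclideanSpace ℝ (Fin 2)) :
    theta (x - p) * theta (y - p) ≤ 8 * theta (x - y) * (theta (x - p) + theta (y - p)) := by
  rcases le_total ‖y - p‖ ‖x - p‖ with h | h
  · have hd : theta (x - p) ≤ 8 * theta (x - y) := by
      apply theta_doubling
      calc ‖x - y‖ ≤ ‖x - p‖ + ‖p - y‖ := norm_sub_le_norm_sub_add_norm_sub _ _ _
        _ = ‖x - p‖ + ‖y - p‖ := by rw [norm_sub_rev p y]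
        _ ≤ 2 * ‖x - p‖ + 1 := by linarith [norm_nonneg (x-p)]
    calc theta (x - p) * theta (y - p) ≤ (8 * theta (x - y)) * theta (y - p) := by
          apply mul_le_mul_of_nonneg_right hd (theta_pos _).le
      _ ≤ 8 * theta (x - y) * (theta (x - p) + theta (y - p)) := by
          have := theta_pos (x - y); have := theta_pos (x - p)
          nlinarith
  · have hd : theta (y - p) ≤ 8 * theta (x - y) := by
      apply theta_doubling
      calc ‖x - y‖ ≤ ‖x - p‖ + ‖p - y‖ := norm_sub_le_norm_sub_add_norm_sub _ _ _
        _ = ‖x - p‖ + ‖y - p‖ := by rw [norm_sub_rev p y]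
        _ ≤ 2 * ‖y - p‖ + 1 := by linarith [norm_nonneg (y-p)]
    calc theta (x - p) * theta (y - p) ≤ theta (x - p) * (8 * theta (x - y)) := by
          apply mul_le_mul_of_nonneg_left hd (theta_pos _).le
      _ ≤ 8 * theta (x - y) * (theta (x - p) + theta (y - p)) := by
          have := theta_pos (x - y); have := theta_pos (y - p)
          nlinarith

lemma Kc_nonneg : 0 ≤ Kc := tsum_nonneg G_nonneg

theorem discrete_convolution_sup_bound :
    ∀ C > (0 : ℝ), ∃ C' > (0 : ℝ), ∃ L₀ > (0 : ℝ), ∀ L ≥ L₀,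
      ∀ (x₀ : EuclideanSpace ℝ (Fin 2)) (g : ℤ × ℤ → ℝ)
        (f : EuclideanSpace ℝ (Fin 2) → ℝ) (M : ℝ),
        (∀ j, |g j| ≤ M) →
        (∀ y, |f y| ≤ C * ∑' j : ℤ × ℤ, |g j| * theta (y - L • latt j)) →
        BddAbove (Set.range fun x => |f x| * (theta (x - x₀))⁻¹) →
        BddAbove (Set.range fun j : ℤ × ℤ => |g j| * (theta (x₀ - L • latt j))⁻¹) →
        (⨆ x, |f x| * (theta (x - x₀))⁻¹) ≤
          C' * ⨆ j : ℤ × ℤ, |g j| * (theta (x₀ - L • latt j))⁻¹ := by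
  intro C hC
  refine ⟨16 * C * (Kc + 1), by nlinarith [Kc_nonneg], 1, one_pos, ?_⟩
  intro L hL x₀ g f M _hM hf _hbf hbg
  set S := ⨆ j : ℤ × ℤ, |g j| * (theta (x₀ - L • latt j))⁻¹ with hSdef
  have hS0 : 0 ≤ S := by
    refine le_trans ?_ (le_ciSup hbg (0, 0))
    exact mul_nonneg (abs_nonneg _) (inv_nonneg.mpr (theta_pos _).le)
  have hg : ∀ j : ℤ × ℤ, |g j| ≤ S * theta (x₀ - L • latt j) := by
    intro j
    have h1 : |g j| * (theta (x₀ - L • latt j))⁻¹ ≤ S := le_ciSup hbg j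
    have hp := theta_pos (x₀ - L • latt j)
    calc |g j| = (|g j| * (theta (x₀ - L • latt j))⁻¹) * theta (x₀ - L • latt j) := by
          field_simp
      _ ≤ S * theta (x₀ - L • latt j) := mul_le_mul_of_nonneg_right h1 hp.le
  rw [show (16 * C * (Kc + 1)) * S = 16 * C * (Kc + 1) * S from rfl]
  apply ciSup_le
  intro x
  have hsum_x := summable_theta L hL x
  have hsum_x₀ := summable_theta L hL x₀
  have key : ∀ j : ℤ × ℤ, |g j| * theta (x - L • latt j) ≤
      8 * S * theta (x - x₀) * (theta (x - L • latt j) + theta (x₀ - L • latt j)) := by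
    intro j
    calc |g j| * theta (x - L • latt j)
        ≤ (S * theta (x₀ - L • latt j)) * theta (x - L • latt j) :=
          mul_le_mul_of_nonneg_right (hg j) (theta_pos _).le
      _ = S * (theta (x - L • latt j) * theta (x₀ - L • latt j)) := by ring
      _ ≤ S * (8 * theta (x - x₀) * (theta (x - L • latt j) + theta (x₀ - L • latt j))) :=
          mul_le_mul_of_nonneg_left (theta_mul x x₀ (L • latt j)) hS0
      _ = 8 * S * theta (x - x₀) * (theta (x - L • latt j) + theta (x₀ - L • latt j)) := by
          ring
  have hsum_rhs : Summable (fun j : ℤ × ℤ =>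
      8 * S * theta (x - x₀) * (theta (x - L • latt j) + theta (x₀ - L • latt j))) :=
    (hsum_x.1.add hsum_x₀.1).mul_left _
  have hsum_lhs : Summable (fun j : ℤ × ℤ => |g j| * theta (x - L • latt j)) :=
    Summable.of_nonneg_of_le
      (fun j => mul_nonneg (abs_nonneg _) (theta_pos _).le) key hsum_rhs
  have hp := theta_pos (x - x₀)
  have hts : (∑' j : ℤ × ℤ, |g j| * theta (x - L • latt j)) ≤
      8 * S * theta (x - x₀) * (2 * Kc) := by
    calc (∑' j : ℤ × ℤ, |g j| * theta (x - L • latt j))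
        ≤ ∑' j : ℤ × ℤ, 8 * S * theta (x - x₀) *
            (theta (x - L • latt j) + theta (x₀ - L • latt j)) :=
          Summable.tsum_le_tsum key hsum_lhs hsum_rhs
      _ = 8 * S * theta (x - x₀) *
            ∑' j : ℤ × ℤ, (theta (x - L • latt j) + theta (x₀ - L • latt j)) :=
          tsum_mul_left
      _ = 8 * S * theta (x - x₀) *
            ((∑' j : ℤ × ℤ, theta (x - L • latt j)) +
             (∑' j : ℤ × ℤ, theta (x₀ - L • latt j))) := by
          rw [Summable.tsum_add hsum_x.1 hsum_x₀.1]
      _ ≤ 8 * S * theta (x - x₀) * (2 * Kc) := by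
          apply mul_le_mul_of_nonneg_left _
            (mul_nonneg (mul_nonneg (by norm_num) hS0) hp.le)
          linarith [hsum_x.2, hsum_x₀.2]
  have hfx : |f x| ≤ 16 * C * (Kc + 1) * S * theta (x - x₀) := by
    have h1 : |f x| ≤ C * (8 * S * theta (x - x₀) * (2 * Kc)) :=
      le_trans (hf x) (mul_le_mul_of_nonneg_left hts hC.le)
    have h2 : 0 ≤ C * S * theta (x - x₀) := by positivity
    nlinarith [Kc_nonneg]
  calc |f x| * (theta (x - x₀))⁻¹
      ≤ (16 * C * (Kc + 1) * S * theta (x - x₀)) * (theta (x - x₀))⁻¹ :=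
        mul_le_mul_of_nonneg_right hfx (inv_nonneg.mpr hp.le)
    _ = 16 * C * (Kc + 1) * S := by field_simp
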